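/- Let p > 1 and let y : ℝ → ℝ be a C² solution of ÿ + y + |y|^{p−1}y = 0 with (y(0), ẏ(0)) ≠ (0,0), and set c = ẏ(0)² + y(0)² + (2/(p+1))|y(0)|^{p+1} > 0. Then y is periodic with minimal period L(c) = 4∫₀¹ dz/√(1 − z² + (2/(p+1))N(c)^{p−1}(1 − z^{p+1})) where N(c) > 0 solves N(c)² + (2/(p+1))N(c)^{p+1} = c, and max_{t∈ℝ}|y(t)| = N(c). -/

import Mathlib

noncomputable section
open Real Filter Topology

namespace MPA
set_option linter.unusedVariables false
set_option linter.unusedSectionVars false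
open Real Filter Topology Set MeasureTheory intervalIntegral


/-- derivative of `|x| ^ q * x` for `q > 0`. -/
lemma hasDerivAt_abs_rpow_mul {q : ℝ} (hq : 0 < q) (x : ℝ) :
    HasDerivAt (fun x : ℝ => |x| ^ q * x) ((q + 1) * |x| ^ q) x := by
  rcases lt_trichotomy x 0 with hx | rfl | hx
  · have h1 : HasDerivAt (fun x : ℝ => (-x) ^ q) (q * (-x) ^ (q - 1) * (-1)) x :=
      (Real.hasDerivAt_rpow_const (p := q) (Or.inl (by linarith))).comp x (hasDerivAt_neg x)
    have h2 := h1.mul (hasDerivAt_id x)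
    have hev : (fun x : ℝ => (-x) ^ q * x) =ᶠ[𝓝 x] fun x : ℝ => |x| ^ q * x := by
      filter_upwards [Iio_mem_nhds hx] with t ht
      rw [abs_of_neg ht]
    have h3 := h2.congr_of_eventuallyEq hev.symm
    convert h3 using 1
    · rfl
    · rfl
    rw [abs_of_neg hx]
    have : (-x) ^ (q - 1) * (-x) = (-x) ^ q := by
      rw [← Real.rpow_add_one (by linarith : (-x) ≠ 0)]; ring_nf
    simp only [id_eq, mul_one]
    linear_combination (-q) * this
  · rw [hasDerivAt_iff_tendsto_slope]
    have hval : (q + 1) * |(0 : ℝ)| ^ q = 0 := by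
      simp [Real.zero_rpow (ne_of_gt hq)]
    rw [hval]
    have hT : Tendsto (fun h : ℝ => |h| ^ q) (𝓝[≠] 0) (𝓝 0) := by
      have hcont : Continuous fun h : ℝ => |h| ^ q :=
        continuous_abs.rpow_const fun _ => Or.inr hq.le
      have := hcont.tendsto 0
      simpa [Real.zero_rpow (ne_of_gt hq)] using this.mono_left nhdsWithin_le_nhds
    refine hT.congr' ?_
    filter_upwards [self_mem_nhdsWithin] with h (hh : h ≠ 0)
    simp only [slope_def_field, abs_zero, Real.zero_rpow (ne_of_gt hq), zero_mul, sub_zero]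
    field_simp
  · have h1 : HasDerivAt (fun x : ℝ => x ^ q) (q * x ^ (q - 1)) x :=
      Real.hasDerivAt_rpow_const (p := q) (Or.inl (ne_of_gt hx))
    have h2 := h1.mul (hasDerivAt_id x)
    have hev : (fun x : ℝ => x ^ q * x) =ᶠ[𝓝 x] fun x : ℝ => |x| ^ q * x := by
      filter_upwards [Ioi_mem_nhds hx] with t ht
      rw [abs_of_pos ht]
    have h3 := h2.congr_of_eventuallyEq hev.symm
    convert h3 using 1
    · rfl
    · rfl
    rw [abs_of_pos hx]
    have : x ^ (q - 1) * x = x ^ q := by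
      rw [← Real.rpow_add_one (ne_of_gt hx)]; ring_nf
    simp only [id_eq, mul_one]
    linear_combination (-q) * this

/-- derivative of `|x| ^ (p+1)` for `p > 1`. -/
lemma hasDerivAt_abs_rpow {p : ℝ} (hp : 1 < p) (x : ℝ) :
    HasDerivAt (fun x : ℝ => |x| ^ (p + 1)) ((p + 1) * (|x| ^ (p - 1) * x)) x := by
  rcases lt_trichotomy x 0 with hx | rfl | hx
  · have h1 : HasDerivAt (fun x : ℝ => (-x) ^ (p + 1)) ((p + 1) * (-x) ^ p * (-1)) x := by
      have := (Real.hasDerivAt_rpow_const (p := p + 1) (x := -x) (Or.inl (by linarith))).comp x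
        (hasDerivAt_neg x)
      convert this using 1
      · rfl
      · rfl
      · rfl
      ring_nf
    have hev : (fun x : ℝ => (-x) ^ (p + 1)) =ᶠ[𝓝 x] fun x : ℝ => |x| ^ (p + 1) := by
      filter_upwards [Iio_mem_nhds hx] with t ht
      rw [abs_of_neg ht]
    have h3 := h1.congr_of_eventuallyEq hev.symm
    convert h3 using 1
    · rfl
    · rfl
    rw [abs_of_neg hx]
    have : (-x) ^ (p - 1) * (-x) = (-x) ^ p := by
      rw [← Real.rpow_add_one (by linarith : (-x) ≠ 0)]; ring_nf
    nlinarith [this]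
  · rw [hasDerivAt_iff_tendsto_slope]
    have hval : (p + 1) * (|(0 : ℝ)| ^ (p - 1) * 0) = 0 := by simp
    rw [hval]
    have hT : Tendsto (fun h : ℝ => |h| ^ p) (𝓝[≠] 0) (𝓝 0) := by
      have hcont : Continuous fun h : ℝ => |h| ^ p :=
        continuous_abs.rpow_const fun _ => Or.inr (by linarith)
      have := hcont.tendsto 0
      simpa [Real.zero_rpow (by linarith : p ≠ 0)] using this.mono_left nhdsWithin_le_nhds
    refine squeeze_zero_norm' ?_ hT
    filter_upwards [self_mem_nhdsWithin] with h (hh : h ≠ 0)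
    have : |slope (fun x : ℝ => |x| ^ (p + 1)) 0 h| = |h| ^ p := by
      rw [slope_def_field]
      simp only [Real.zero_rpow (by linarith : p + 1 ≠ 0), abs_zero]
      rw [sub_zero, sub_zero, abs_div,
        abs_of_nonneg (Real.rpow_nonneg (abs_nonneg h) _),
        Real.rpow_add_one (by simpa using hh : |h| ≠ 0), mul_div_assoc,
        div_self (by simpa using hh : |h| ≠ 0), mul_one]
    rw [Real.norm_eq_abs, this]
  · have h1 : HasDerivAt (fun x : ℝ => x ^ (p + 1)) ((p + 1) * x ^ p) x := by
      have := Real.hasDerivAt_rpow_const (p := p + 1) (x := x) (Or.inl (ne_of_gt hx))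
      convert this using 1
      ring_nf
    have hev : (fun x : ℝ => x ^ (p + 1)) =ᶠ[𝓝 x] fun x : ℝ => |x| ^ (p + 1) := by
      filter_upwards [Ioi_mem_nhds hx] with t ht
      rw [abs_of_pos ht]
    have h3 := h1.congr_of_eventuallyEq hev.symm
    convert h3 using 1
    · rfl
    · rfl
    rw [abs_of_pos hx]
    have : x ^ (p - 1) * x = x ^ p := by
      rw [← Real.rpow_add_one (ne_of_gt hx)]; ring_nf
    nlinarith [this]


variable {p c N : ℝ}


def g (p x : ℝ) : ℝ := x + |x| ^ (p - 1) * x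
def F (p x : ℝ) : ℝ := x ^ 2 + 2 / (p + 1) * |x| ^ (p + 1)

lemma g_cont (hp : 1 < p) : Continuous (g p) :=
  continuous_id.add ((continuous_abs.rpow_const fun _ => Or.inr (by linarith)).mul continuous_id)

lemma F_cont (hp : 1 < p) : Continuous (F p) :=
  (continuous_pow 2).add (continuous_const.mul
    (continuous_abs.rpow_const fun _ => Or.inr (by linarith)))

lemma g_odd (x : ℝ) : g p (-x) = -(g p x) := by
  simp [g]; ring

lemma F_neg (x : ℝ) : F p (-x) = F p x := by simp [F]

lemma F_abs (x : ℝ) : F p |x| = F p x := by simp [F, sq_abs]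

lemma F_hasDerivAt (hp : 1 < p) (x : ℝ) : HasDerivAt (F p) (2 * g p x) x := by
  have h1 := (hasDerivAt_pow 2 x).add ((hasDerivAt_abs_rpow hp x).const_mul (2 / (p + 1)))
  convert h1 using 1
  · rfl
  · rfl
  · rfl
  have hp1 : p + 1 ≠ 0 := by linarith
  unfold g
  field_simp
  ring

lemma g_hasDerivAt (hp : 1 < p) (x : ℝ) :
    HasDerivAt (g p) (1 + p * |x| ^ (p - 1)) x := by
  have h1 := (hasDerivAt_id x).add (hasDerivAt_abs_rpow_mul (q := p - 1) (by linarith) x)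
  convert h1 using 1
  · rfl
  · rfl
  · rfl
  ring_nf

lemma F_strictMonoOn (hp : 1 < p) : StrictMonoOn (F p) (Ici 0) := by
  intro a ha b hb hab
  simp only [F]
  have h1 : a ^ 2 < b ^ 2 := by nlinarith [mem_Ici.mp ha]
  have h2 : |a| ^ (p + 1) < |b| ^ (p + 1) := by
    rw [abs_of_nonneg (mem_Ici.mp ha), abs_of_nonneg ((mem_Ici.mp ha).trans hab.le)]
    exact Real.rpow_lt_rpow (mem_Ici.mp ha) hab (by linarith)
  have h3 : (0:ℝ) < 2 / (p + 1) := by positivity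
  nlinarith

lemma abs_le_of_F_le (hp : 1 < p) (hN0 : 0 ≤ N) {x : ℝ} (h : F p x ≤ F p N) : |x| ≤ N := by
  by_contra hlt
  push_neg at hlt
  have := F_strictMonoOn hp (mem_Ici.mpr hN0) (mem_Ici.mpr (abs_nonneg x)) hlt
  rw [F_abs] at this
  linarith

lemma F_lt_of_abs_lt (hp : 1 < p) {x : ℝ} (h : |x| < N) : F p x < F p N := by
  have := F_strictMonoOn hp (mem_Ici.mpr (abs_nonneg x))
    (mem_Ici.mpr ((abs_nonneg x).trans h.le)) h
  rwa [F_abs] at this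

lemma abs_eq_of_F_eq (hp : 1 < p) (hN0 : 0 ≤ N) {x : ℝ} (h : F p x = F p N) : |x| = N := by
  rcases lt_trichotomy (|x|) N with hl | he | hg
  · exact absurd (F_lt_of_abs_lt hp hl) (by rw [h]; exact lt_irrefl _)
  · exact he
  · have := F_strictMonoOn hp (mem_Ici.mpr hN0) (mem_Ici.mpr (abs_nonneg x)) hg
    rw [F_abs] at this
    linarith

structure IsSol (p : ℝ) (y : ℝ → ℝ) : Prop where
  smooth : ContDiff ℝ 2 y
  ode : ∀ t, deriv (deriv y) t = -(g p (y t))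

lemma IsSol.diff {y : ℝ → ℝ} (hy : IsSol p y) : Differentiable ℝ y := by
  have h2 : ContDiff ℝ (1 + 1 : WithTop ℕ∞) y := by exact_mod_cast hy.smooth
  exact (contDiff_succ_iff_deriv.mp h2).1

lemma IsSol.diff_deriv {y : ℝ → ℝ} (hy : IsSol p y) : Differentiable ℝ (deriv y) := by
  have h2 : ContDiff ℝ (1 + 1 : WithTop ℕ∞) y := by exact_mod_cast hy.smooth
  exact (contDiff_one_iff_deriv.mp (contDiff_succ_iff_deriv.mp h2).2.2).1

lemma IsSol.cont_deriv {y : ℝ → ℝ} (hy : IsSol p y) : Continuous (deriv y) :=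
  hy.diff_deriv.continuous

def HasEnergy (p c : ℝ) (y : ℝ → ℝ) : Prop := ∀ t, deriv y t ^ 2 + F p (y t) = c

lemma IsSol.energy (hp : 1 < p) {y : ℝ → ℝ} (hy : IsSol p y) (t : ℝ) :
    deriv y t ^ 2 + F p (y t) = deriv y 0 ^ 2 + F p (y 0) := by
  set E : ℝ → ℝ := fun t => deriv y t ^ 2 + F p (y t) with hE
  have hE' : ∀ t, HasDerivAt E 0 t := by
    intro t
    have h1 : HasDerivAt (deriv y) (deriv (deriv y) t) t := (hy.diff_deriv t).hasDerivAt
    have h2 : HasDerivAt y (deriv y t) t := (hy.diff t).hasDerivAt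
    have h3 := (h1.pow 2).add ((F_hasDerivAt hp (y t)).comp t h2)
    rw [hy.ode t] at h3
    convert h3 using 1
    · rfl
    · rfl
    · rfl
    ring
  have hconst := is_const_of_deriv_eq_zero (fun t => (hE' t).differentiableAt)
    (fun t => (hE' t).deriv) t 0
  exact hconst



section transforms
variable {y : ℝ → ℝ}

lemma deriv_neg_fun (y : ℝ → ℝ) : deriv (fun t => -(y t)) = fun t => -(deriv y t) :=
  funext fun t => deriv.neg

lemma deriv_shift (y : ℝ → ℝ) (a : ℝ) :
    deriv (fun t => y (t + a)) = fun t => deriv y (t + a) :=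
  funext fun t => deriv_comp_add_const y a t

lemma deriv_reflect (y : ℝ → ℝ) : deriv (fun t => y (-t)) = fun t => -(deriv y (-t)) :=
  funext fun t => deriv_comp_neg y t

lemma IsSol.neg (hy : IsSol p y) : IsSol p (fun t => -(y t)) := by
  constructor
  · exact hy.smooth.neg
  · intro t
    rw [deriv_neg_fun y, deriv_neg_fun (deriv y)]
    simp only [hy.ode t, g_odd]

lemma IsSol.shift (hy : IsSol p y) (a : ℝ) : IsSol p (fun t => y (t + a)) := by
  constructor
  · exact hy.smooth.comp (contDiff_id.add contDiff_const)
  · intro t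
    rw [deriv_shift y a, deriv_shift (deriv y) a]
    simp only [hy.ode]

lemma IsSol.reflect (hy : IsSol p y) : IsSol p (fun t => y (-t)) := by
  constructor
  · exact hy.smooth.comp contDiff_neg
  · intro t
    rw [deriv_reflect y]
    have : deriv (fun t => -(deriv y (-t))) t = -(deriv (fun t => deriv y (-t)) t) := deriv.neg
    rw [this, deriv_comp_neg (deriv y) t, hy.ode]
    ring

lemma HasEnergy.neg (hy : HasEnergy p c y) : HasEnergy p c (fun t => -(y t)) := by
  intro t
  rw [deriv_neg_fun y]
  simpa [F_neg, neg_pow] using hy t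

lemma HasEnergy.shift (hy : HasEnergy p c y) (a : ℝ) : HasEnergy p c (fun t => y (t + a)) := by
  intro t
  rw [deriv_shift y a]
  exact hy (t + a)

lemma HasEnergy.reflect (hy : HasEnergy p c y) : HasEnergy p c (fun t => y (-t)) := by
  intro t
  rw [deriv_reflect y]
  simpa [neg_pow] using hy (-t)

lemma HasEnergy.v_sq (hy : HasEnergy p c y) (t : ℝ) : deriv y t ^ 2 = c - F p (y t) := by
  have := hy t; linarith

end transforms


def hfun (p c x : ℝ) : ℝ := (Real.sqrt (c - F p x))⁻¹
def G (p c N x : ℝ) : ℝ := ∫ u in (-N)..x, hfun p c u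

lemma hfun_meas (hp : 1 < p) : Measurable (hfun p c) :=
  ((continuous_const.sub (F_cont hp)).sqrt.measurable).inv

lemma key_ineq (hp : 1 < p) (hN0 : 0 ≤ N) (hFN : F p N = c) {x : ℝ} (hx : x ∈ Icc 0 N) :
    N * (N - x) ≤ c - F p x := by
  obtain ⟨hx0, hxN⟩ := hx
  have habs : |x| ^ (p + 1) ≤ |N| ^ (p + 1) := by
    apply Real.rpow_le_rpow (abs_nonneg x) _ (by linarith)
    rw [abs_of_nonneg hx0, abs_of_nonneg hN0]; exact hxN
  have h3 : (0:ℝ) < 2 / (p + 1) := by positivity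
  have : F p x ≤ x ^ 2 + 2 / (p + 1) * |N| ^ (p + 1) := by
    simp only [F]; nlinarith
  have hFN' : c = N ^ 2 + 2 / (p + 1) * |N| ^ (p + 1) := by rw [← hFN]; simp [F]
  nlinarith

lemma intble_half (hp : 1 < p) (hN0 : 0 < N) (hFN : F p N = c) :
    IntervalIntegrable (hfun p c) volume 0 N := by
  set r : ℝ := -(1/2) with hr
  have f1 : IntervalIntegrable (fun u : ℝ => u ^ r) volume 0 N :=
    intervalIntegral.intervalIntegrable_rpow' (by norm_num)
  have f2 : IntervalIntegrable (fun x : ℝ => (-x) ^ r) volume 0 (-N) :=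
    ((IntervalIntegrable.iff_comp_neg (f := fun u : ℝ => u ^ r) (a := 0) (b := N)).mp f1 : IntervalIntegrable _ volume (-0) (-N)).mono_set
      (by rw [neg_zero])
  have f3 : IntervalIntegrable (fun x : ℝ => (N - x) ^ r) volume N 0 := by
    have := f2.comp_sub_right N
    simp only [neg_sub, zero_add, neg_add_cancel] at this
    exact this
  have f4 : IntervalIntegrable (fun x : ℝ => (Real.sqrt N)⁻¹ * (N - x) ^ r) volume 0 N :=
    (f3.symm).const_mul _
  apply f4.mono_fun ((hfun_meas hp).aestronglyMeasurable.restrict)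
  refine (ae_restrict_iff' measurableSet_uIoc).mpr ?_
  refine Eventually.of_forall fun x hx => ?_
  rw [uIoc_of_le hN0.le] at hx
  obtain ⟨hx0, hxN⟩ := hx
  have hkey := key_ineq hp hN0.le hFN (⟨hx0.le, hxN⟩ : x ∈ Icc 0 N)
  have hnn : 0 ≤ N * (N - x) := by nlinarith
  have hfnn : 0 ≤ hfun p c x := inv_nonneg.mpr (Real.sqrt_nonneg _)
  have hmnn : 0 ≤ (Real.sqrt N)⁻¹ * (N - x) ^ r :=
    mul_nonneg (inv_nonneg.mpr (Real.sqrt_nonneg _)) (Real.rpow_nonneg (by linarith) _)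
  show ‖hfun p c x‖ ≤ ‖(Real.sqrt N)⁻¹ * (N - x) ^ r‖
  rw [Real.norm_eq_abs, Real.norm_eq_abs, abs_of_nonneg hfnn, abs_of_nonneg hmnn]
  have hsq : Real.sqrt (N * (N - x)) ≤ Real.sqrt (c - F p x) := Real.sqrt_le_sqrt hkey
  have hsplit : Real.sqrt (N * (N - x)) = Real.sqrt N * Real.sqrt (N - x) :=
    Real.sqrt_mul hN0.le _
  have hrw : (N - x) ^ r = (Real.sqrt (N - x))⁻¹ := by
    rw [hr, Real.rpow_neg (by linarith), Real.sqrt_eq_rpow]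
  rw [hrw, ← mul_inv, hfun]
  rcases eq_or_lt_of_le hxN with heq | hlt
  · rw [heq]
    simp [← hFN]
  · apply inv_anti₀
    · rw [← hsplit]
      apply Real.sqrt_pos.mpr
      nlinarith
    · rw [← hsplit]; exact hsq

lemma intble (hp : 1 < p) (hN0 : 0 < N) (hFN : F p N = c) :
    IntervalIntegrable (hfun p c) volume (-N) N := by
  have h1 := intble_half hp hN0 hFN
  have h2 : IntervalIntegrable (fun x : ℝ => hfun p c (-x)) volume 0 (-N) := by
    have := (IntervalIntegrable.iff_comp_neg (f := hfun p c) (a := 0) (b := N)).mp h1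
    simpa using this
  have h3 : (fun x : ℝ => hfun p c (-x)) = hfun p c := by
    funext x; simp [hfun, F_neg]
  rw [h3] at h2
  exact (h2.symm).trans h1

lemma intble_sub (hp : 1 < p) (hN0 : 0 < N) (hFN : F p N = c) {a b : ℝ}
    (ha : a ∈ Icc (-N) N) (hb : b ∈ Icc (-N) N) :
    IntervalIntegrable (hfun p c) volume a b := by
  apply (intble hp hN0 hFN).mono_set
  rw [uIcc_of_le (by linarith [ha.1, ha.2] : (-N : ℝ) ≤ N)]
  exact uIcc_subset_Icc ha hb

lemma c_sub_F_pos (hp : 1 < p) (hFN : F p N = c) {x : ℝ} (hx : |x| < N) :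
    0 < c - F p x := by
  have := F_lt_of_abs_lt hp hx
  rw [hFN] at this; linarith

lemma hfun_pos (hp : 1 < p) (hFN : F p N = c) {x : ℝ} (hx : |x| < N) :
    0 < hfun p c x :=
  inv_pos.mpr (Real.sqrt_pos.mpr (c_sub_F_pos hp hFN hx))

lemma hfun_contAt (hp : 1 < p) (hFN : F p N = c) {x : ℝ} (hx : |x| < N) :
    ContinuousAt (hfun p c) x := by
  apply ContinuousAt.inv₀
  · exact (continuous_const.sub (F_cont hp)).sqrt.continuousAt
  · exact ne_of_gt (Real.sqrt_pos.mpr (c_sub_F_pos hp hFN hx))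

lemma G_cont (hp : 1 < p) (hN0 : 0 < N) (hFN : F p N = c) :
    ContinuousOn (G p c N) (Icc (-N) N) := by
  have h := intervalIntegral.continuousOn_primitive_interval'
    (intble hp hN0 hFN) (left_mem_uIcc (a := -N) (b := N))
  rwa [uIcc_of_le (by linarith : (-N : ℝ) ≤ N)] at h

lemma G_hasDerivAt (hp : 1 < p) (hN0 : 0 < N) (hFN : F p N = c) {x : ℝ} (hx : |x| < N) :
    HasDerivAt (G p c N) (hfun p c x) x := by
  apply intervalIntegral.integral_hasDerivAt_right
  · apply intble_sub hp hN0 hFN (left_mem_Icc.mpr (by linarith))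
    constructor <;> [linarith [abs_le.mp hx.le] ; linarith [(abs_le.mp hx.le).2]]
  · exact ⟨univ, univ_mem, ((hfun_meas hp).aestronglyMeasurable).restrict⟩
  · exact hfun_contAt hp hFN hx

lemma G_strictMonoOn (hp : 1 < p) (hN0 : 0 < N) (hFN : F p N = c) :
    StrictMonoOn (G p c N) (Icc (-N) N) := by
  intro a ha b hb hab
  have hGa := intble_sub hp hN0 hFN (left_mem_Icc.mpr (by linarith [ha.1, ha.2])) ha
  have hGb := intble_sub hp hN0 hFN (left_mem_Icc.mpr (by linarith [ha.1, ha.2])) hb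
  have hdiff : G p c N b - G p c N a = ∫ u in a..b, hfun p c u :=
    intervalIntegral.integral_interval_sub_left hGb hGa
  have hpos : 0 < ∫ u in a..b, hfun p c u := by
    apply intervalIntegral.intervalIntegral_pos_of_pos_on
      (intble_sub hp hN0 hFN ha hb) _ hab
    intro x hx
    apply hfun_pos hp hFN
    rw [abs_lt]
    constructor <;> [linarith [ha.1, hx.1] ; linarith [hb.2, hx.2]]
  linarith



section dynamics
variable (hp : 1 < p) (hN0 : 0 < N) (hFN : F p N = c) {y : ℝ → ℝ}
  (hy : IsSol p y) (hE : HasEnergy p c y)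

include hp hN0 hFN hy hE

lemma sol_abs_le (t : ℝ) : |y t| ≤ N := by
  apply abs_le_of_F_le hp hN0.le
  rw [hFN]
  nlinarith [hE t, sq_nonneg (deriv y t)]

lemma sol_mem (t : ℝ) : y t ∈ Icc (-N) N := by
  have := abs_le.mp (sol_abs_le hp hN0 hFN hy hE t)
  exact ⟨this.1, this.2⟩

lemma sol_abs_lt {t : ℝ} (hv : deriv y t ≠ 0) : |y t| < N := by
  rcases lt_or_eq_of_le (sol_abs_le hp hN0 hFN hy hE t) with h | h
  · exact h
  · exfalso
    have h1 : F p (y t) = c := by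
      rw [← hFN, ← F_abs (p := p) (y t), h]
    have := hE.v_sq t
    rw [h1] at this
    exact hv (pow_eq_zero_iff (n := 2) (by norm_num) |>.mp (by linarith))

lemma time_identity {t₁ s : ℝ} (hts : t₁ ≤ s) (hv : ∀ t ∈ Ico t₁ s, 0 < deriv y t) :
    ∀ t ∈ Icc t₁ s, G p c N (y t) - G p c N (y t₁) = t - t₁ := by
  set ψ : ℝ → ℝ := fun t => G p c N (y t) - t with hψ
  have hcont : ContinuousOn ψ (Icc t₁ s) := by
    apply ContinuousOn.sub _ continuousOn_id
    exact (G_cont hp hN0 hFN).comp hy.diff.continuous.continuousOn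
      (fun t _ => sol_mem hp hN0 hFN hy hE t)
  have hderiv : ∀ t ∈ Ico t₁ s, HasDerivWithinAt ψ 0 (Ici t) t := by
    intro t ht
    have hlt : |y t| < N := sol_abs_lt hp hN0 hFN hy hE (ne_of_gt (hv t ht))
    have hG := G_hasDerivAt hp hN0 hFN hlt
    have hyd : HasDerivAt y (deriv y t) t := (hy.diff t).hasDerivAt
    have hcomp : HasDerivAt (fun t => G p c N (y t)) (hfun p c (y t) * deriv y t) t :=
      HasDerivAt.comp t hG hyd
    have hval : hfun p c (y t) * deriv y t = 1 := by
      have hsq : Real.sqrt (c - F p (y t)) = deriv y t := by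
        rw [← hE.v_sq t]
        exact Real.sqrt_sq (hv t ht).le
      rw [hfun, hsq]
      exact inv_mul_cancel₀ (ne_of_gt (hv t ht))
    have hfinal := hcomp.sub (hasDerivAt_id t)
    rw [hval] at hfinal
    have hfw := hfinal.hasDerivWithinAt (s := Ici t)
    simp at hfw
    exact hfw
  have hc := constant_of_has_deriv_right_zero hcont hderiv
  intro t ht
  have := hc t ht
  simp only [hψ] at this
  linarith

lemma reach (t₁ : ℝ) (hv1 : 0 < deriv y t₁) :
    ∃ τ, t₁ < τ ∧ y τ = N ∧ deriv y τ = 0 ∧ (∀ t ∈ Ico t₁ τ, 0 < deriv y t) ∧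
      τ - t₁ = G p c N N - G p c N (y t₁) := by
  set S : Set ℝ := Ici t₁ ∩ deriv y ⁻¹' Iic 0 with hS
  have hSc : IsClosed S := isClosed_Ici.inter (isClosed_Iic.preimage hy.cont_deriv)
  have hSne : S.Nonempty := by
    by_contra hne
    rw [Set.not_nonempty_iff_eq_empty] at hne
    have hvpos : ∀ t, t₁ ≤ t → 0 < deriv y t := by
      intro t ht
      by_contra hle
      push_neg at hle
      have : t ∈ S := ⟨ht, hle⟩
      rw [hne] at this
      exact this
    have hbound : ∀ s, t₁ ≤ s → s - t₁ ≤ G p c N N - G p c N (y t₁) := by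
      intro s hs
      have hid := time_identity hp hN0 hFN hy hE hs
        (fun t ht => hvpos t ht.1) s (right_mem_Icc.mpr hs)
      have hGle : G p c N (y s) ≤ G p c N N := by
        apply (G_strictMonoOn hp hN0 hFN).monotoneOn (sol_mem hp hN0 hFN hy hE s)
          (right_mem_Icc.mpr (by linarith)) (sol_mem hp hN0 hFN hy hE s).2
      linarith
    have := hbound (t₁ + (G p c N N - G p c N (y t₁)) + 1) (by
      have := hbound t₁ le_rfl
      linarith)
    linarith [hbound t₁ le_rfl]
  set τ := sInf S with hτ
  have hτS : τ ∈ S := hSc.csInf_mem hSne ⟨t₁, fun x hx => hx.1⟩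
  have ht₁τ : t₁ < τ := by
    rcases lt_or_eq_of_le (show t₁ ≤ τ from hτS.1) with h | h
    · exact h
    · exfalso
      have : deriv y τ ≤ 0 := hτS.2
      rw [← h] at this
      linarith
  have hIco : ∀ t ∈ Ico t₁ τ, 0 < deriv y t := by
    intro t ht
    by_contra hle
    push_neg at hle
    have : t ∈ S := ⟨ht.1, hle⟩
    exact absurd (csInf_le ⟨t₁, fun x hx => hx.1⟩ this) (not_le.mpr ht.2)
  have hvτ : deriv y τ = 0 := by
    refine le_antisymm hτS.2 ?_
    have htend : Tendsto (deriv y) (𝓝[<] τ) (𝓝 (deriv y τ)) :=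
      (hy.cont_deriv.tendsto τ).mono_left nhdsWithin_le_nhds
    refine ge_of_tendsto htend ?_
    filter_upwards [Ioo_mem_nhdsLT_of_mem ⟨ht₁τ, le_rfl⟩] with x hx
    exact (hIco x ⟨hx.1.le, hx.2⟩).le
  have hyabs : |y τ| = N := by
    apply abs_eq_of_F_eq hp hN0.le
    rw [hFN]
    have := hE.v_sq τ
    rw [hvτ] at this
    norm_num at this
    linarith
  have hymono : StrictMonoOn y (Icc t₁ τ) := by
    apply strictMonoOn_of_deriv_pos (convex_Icc t₁ τ) hy.diff.continuous.continuousOn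
    intro t ht
    rw [interior_Icc] at ht
    exact hIco t ⟨ht.1.le, ht.2⟩
  have hyτ : y τ = N := by
    rcases abs_eq hN0.le |>.mp hyabs with h | h
    · exact h
    · exfalso
      have h1 : y t₁ < y τ := hymono (left_mem_Icc.mpr ht₁τ.le) (right_mem_Icc.mpr ht₁τ.le) ht₁τ
      have h2 : -N ≤ y t₁ := (sol_mem hp hN0 hFN hy hE t₁).1
      rw [h] at h1
      linarith
  have hid := time_identity hp hN0 hFN hy hE ht₁τ.le hIco τ (right_mem_Icc.mpr ht₁τ.le)
  rw [hyτ] at hid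
  exact ⟨τ, ht₁τ, hyτ, hvτ, hIco, by linarith⟩

lemma reach_from_bottom (a : ℝ) (hya : y a = -N) (hva : deriv y a = 0) :
    y (a + G p c N N) = N ∧ deriv y (a + G p c N N) = 0 ∧
      (∀ t ∈ Ioo a (a + G p c N N), 0 < deriv y t) ∧
      StrictMonoOn y (Icc a (a + G p c N N)) ∧ 0 < G p c N N := by
  have hGa0 : G p c N (y a) = 0 := by rw [hya, G, intervalIntegral.integral_same]
  -- the second derivative of y is positive near a
  have hdd : deriv (deriv y) = fun t => -(g p (y t)) := funext hy.ode
  have hdda : 0 < deriv (deriv y) a := by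
    rw [hy.ode a, hya, g_odd]
    have : 0 < g p N := by
      have : (0:ℝ) < |N| ^ (p - 1) * N := by
        apply mul_pos _ hN0
        apply Real.rpow_pos_of_pos (abs_pos.mpr (ne_of_gt hN0))
      simp only [g]; linarith
    linarith
  have hev : ∀ᶠ t in 𝓝 a, 0 < deriv (deriv y) t := by
    have hcont : Continuous (deriv (deriv y)) := by
      rw [hdd]
      exact ((g_cont hp).comp hy.diff.continuous).neg
    exact hcont.continuousAt.preimage_mem_nhds (Ioi_mem_nhds hdda)
  obtain ⟨ε, hε, hball⟩ := Metric.eventually_nhds_iff.mp hev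
  set δ := ε / 2 with hδ
  have hδ0 : 0 < δ := by positivity
  have hvmono : StrictMonoOn (deriv y) (Icc a (a + δ)) := by
    apply strictMonoOn_of_deriv_pos (convex_Icc _ _) hy.cont_deriv.continuousOn
    intro t ht
    rw [interior_Icc] at ht
    apply hball
    rw [Real.dist_eq, abs_of_pos (by linarith [ht.1] : (0:ℝ) < t - a)]
    linarith [ht.2]
  have hvpos : ∀ t ∈ Ioc a (a + δ), 0 < deriv y t := by
    intro t ht
    have := hvmono (left_mem_Icc.mpr (by linarith)) ⟨ht.1.le, ht.2⟩ ht.1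
    rw [hva] at this
    exact this
  -- time from a to t₁
  have htime : ∀ t₁ ∈ Ioc a (a + δ), t₁ - a = G p c N (y t₁) := by
    intro t₁ ht₁
    have hGyc : Continuous (fun t => G p c N (y t)) :=
      (G_cont hp hN0 hFN).comp_continuous hy.diff.continuous
        (fun t => sol_mem hp hN0 hFN hy hE t)
    have hkey : ∀ e ∈ Ioc a t₁, G p c N (y t₁) - G p c N (y e) = t₁ - e := by
      intro e he
      apply time_identity hp hN0 hFN hy hE he.2
        (fun t ht => hvpos t ⟨lt_of_lt_of_le he.1 ht.1, le_trans ht.2.le ht₁.2⟩)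
        t₁ (right_mem_Icc.mpr he.2)
    have h1 : Tendsto (fun e => G p c N (y t₁) - G p c N (y e)) (𝓝[>] a)
        (𝓝 (G p c N (y t₁) - G p c N (y a))) :=
      (tendsto_const_nhds.sub (hGyc.tendsto a)).mono_left nhdsWithin_le_nhds
    have h2 : Tendsto (fun e : ℝ => t₁ - e) (𝓝[>] a) (𝓝 (t₁ - a)) :=
      (tendsto_const_nhds.sub tendsto_id).mono_left nhdsWithin_le_nhds
    have heq : G p c N (y t₁) - G p c N (y a) = t₁ - a := by
      apply tendsto_nhds_unique (h1.congr' _) h2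
      filter_upwards [Ioc_mem_nhdsGT_of_mem ⟨le_rfl, ht₁.1⟩] with e he
      exact hkey e he
    rw [hGa0] at heq
    linarith
  -- apply reach from t₁ := a + δ
  set t₁ := a + δ with ht₁def
  have ht₁mem : t₁ ∈ Ioc a (a + δ) := ⟨by linarith, le_rfl⟩
  obtain ⟨τ, hτ1, hτ2, hτ3, hτ4, hτ5⟩ := reach hp hN0 hFN hy hE t₁ (hvpos t₁ ht₁mem)
  have hτT : τ = a + G p c N N := by
    have := htime t₁ ht₁mem
    linarith
  have hGpos : 0 < G p c N N := by
    have := htime t₁ ht₁mem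
    linarith
  rw [hτT] at hτ1 hτ2 hτ3 hτ4
  have hallpos : ∀ t ∈ Ioo a (a + G p c N N), 0 < deriv y t := by
    intro t ht
    rcases le_or_gt t t₁ with h | h
    · exact hvpos t ⟨ht.1, h⟩
    · exact hτ4 t ⟨h.le, ht.2⟩
  refine ⟨hτ2, hτ3, hallpos, ?_, hGpos⟩
  apply strictMonoOn_of_deriv_pos (convex_Icc _ _) hy.diff.continuous.continuousOn
  intro t ht
  rw [interior_Icc] at ht
  exact hallpos t ht

lemma halfswing (t₀ : ℝ) (hyt : y t₀ = N) (hvt : deriv y t₀ = 0) :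
    y (t₀ + G p c N N) = -N ∧ deriv y (t₀ + G p c N N) = 0 ∧
      ∀ t ∈ Ioo t₀ (t₀ + G p c N N), |y t| < N := by
  set u : ℝ → ℝ := fun t => -(y t) with hu
  have hu1 : u t₀ = -N := by rw [hu]; simp [hyt]
  have hu2 : deriv u t₀ = 0 := by
    rw [hu, deriv_neg_fun]
    show -(deriv y t₀) = 0
    rw [hvt]; ring
  obtain ⟨h1, h2, h3, h4, h5⟩ := reach_from_bottom hp hN0 hFN hy.neg hE.neg t₀ hu1 hu2
  have hy1 : y (t₀ + G p c N N) = -N := by linarith [h1]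
  have hy2 : deriv y (t₀ + G p c N N) = 0 := by
    have h2' := h2
    rw [deriv_neg_fun] at h2'
    have h2'' : -(deriv y (t₀ + G p c N N)) = 0 := h2'
    linarith
  refine ⟨hy1, hy2, ?_⟩
  intro t ht
  have hlow : u t₀ < u t := h4 (left_mem_Icc.mpr (by linarith [ht.1, ht.2]))
    ⟨ht.1.le, ht.2.le⟩ ht.1
  have hhigh : u t < u (t₀ + G p c N N) := h4 ⟨ht.1.le, ht.2.le⟩
    (right_mem_Icc.mpr (by linarith [ht.1, ht.2])) ht.2
  rw [hu1] at hlow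
  have hT : u (t₀ + G p c N N) = N := h1
  rw [hT] at hhigh
  have hut : u t = -(y t) := rfl
  rw [hut] at hlow hhigh
  rw [abs_lt]
  constructor <;> linarith

lemma exists_top : ∃ t₀, y t₀ = N ∧ deriv y t₀ = 0 := by
  rcases lt_trichotomy (deriv y 0) 0 with hv | hv | hv
  · set u : ℝ → ℝ := fun t => y (-t) with hu
    have hdu : deriv u 0 = -(deriv y 0) := by rw [hu, deriv_reflect]; simp
    obtain ⟨τ, _, hτ2, hτ3, _, _⟩ := reach hp hN0 hFN hy.reflect hE.reflect 0
      (by rw [hdu]; linarith)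
    refine ⟨-τ, hτ2, ?_⟩
    have : deriv u τ = -(deriv y (-τ)) := by rw [hu, deriv_reflect]
    rw [hτ3] at this
    linarith
  · have hFy0 : F p (y 0) = c := by
      have := hE.v_sq 0
      rw [hv] at this
      norm_num at this
      linarith
    have habs : |y 0| = N := abs_eq_of_F_eq hp hN0.le (by rw [hFN]; exact hFy0)
    rcases (abs_eq hN0.le).mp habs with h | h
    · exact ⟨0, h, hv⟩
    · obtain ⟨h1, h2, _, _, _⟩ := reach_from_bottom hp hN0 hFN hy hE 0 h hv
      exact ⟨0 + G p c N N, h1, h2⟩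
  · obtain ⟨τ, _, hτ2, hτ3, _, _⟩ := reach hp hN0 hFN hy hE 0 hv
    exact ⟨τ, hτ2, hτ3⟩

end dynamics


section uniq

lemma F_nonneg (hp : 1 < p) (x : ℝ) : 0 ≤ F p x := by
  have h1 := Real.rpow_nonneg (abs_nonneg x) (p + 1)
  have h2 : (0:ℝ) < 2 / (p + 1) := by positivity
  have := sq_nonneg x
  unfold F
  nlinarith

/-- Lipschitz bound for `g` on an interval. -/
lemma g_lipschitz (hp : 1 < p) (R : ℝ) (hR : 0 ≤ R) :
    LipschitzOnWith (1 + p * R ^ (p - 1)).toNNReal (g p) (Icc (-R) R) := by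
  have hp0 : (0:ℝ) ≤ 1 + p * R ^ (p - 1) := by
    have : (0:ℝ) ≤ R ^ (p - 1) := Real.rpow_nonneg hR _
    nlinarith [hp]
  apply Convex.lipschitzOnWith_of_nnnorm_deriv_le
    (fun x _ => (g_hasDerivAt hp x).differentiableAt) _ (convex_Icc _ _)
  intro x hx
  rw [← NNReal.coe_le_coe, coe_nnnorm, Real.coe_toNNReal _ hp0,
    (g_hasDerivAt hp x).deriv, Real.norm_eq_abs]
  have h1 : (0:ℝ) ≤ |x| ^ (p - 1) := Real.rpow_nonneg (abs_nonneg _) _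
  have h2 : |x| ^ (p - 1) ≤ R ^ (p - 1) := by
    apply Real.rpow_le_rpow (abs_nonneg _) _ (by linarith)
    rw [abs_le]; exact ⟨hx.1, hx.2⟩
  rw [abs_of_nonneg (by nlinarith : (0:ℝ) ≤ 1 + p * |x| ^ (p - 1))]
  nlinarith

/-- The vector field of the system. -/
def vf (p : ℝ) (q : ℝ × ℝ) : ℝ × ℝ := (q.2, -(g p q.1))

lemma vf_lipschitz (hp : 1 < p) (R : ℝ) (hR : 0 ≤ R) :
    LipschitzOnWith (1 + (1 + p * R ^ (p - 1)).toNNReal) (vf p)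
      (Metric.closedBall (0 : ℝ × ℝ) R) := by
  set K := (1 + p * R ^ (p - 1)).toNNReal with hK
  rw [lipschitzOnWith_iff_dist_le_mul]
  intro q hq q' hq'
  have hq1 : q.1 ∈ Icc (-R) R := by
    have h1 : ‖q‖ ≤ R := by simpa [Metric.mem_closedBall, dist_zero_right] using hq
    have := (norm_fst_le q).trans h1
    rw [Real.norm_eq_abs] at this
    exact abs_le.mp this |>.imp (fun h => h) (fun h => h)
  have hq'1 : q'.1 ∈ Icc (-R) R := by
    have h1 : ‖q'‖ ≤ R := by simpa [Metric.mem_closedBall, dist_zero_right] using hq'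
    have := (norm_fst_le q').trans h1
    rw [Real.norm_eq_abs] at this
    exact abs_le.mp this |>.imp (fun h => h) (fun h => h)
  have hgl := (lipschitzOnWith_iff_dist_le_mul.mp (g_lipschitz hp R hR)) q.1 hq1 q'.1 hq'1
  rw [Prod.dist_eq]
  rw [Prod.dist_eq (x := q) (y := q')]
  have h2 : dist q.2 q'.2 ≤ max (dist q.1 q'.1) (dist q.2 q'.2) := le_max_right _ _
  have h1 : dist q.1 q'.1 ≤ max (dist q.1 q'.1) (dist q.2 q'.2) := le_max_left _ _
  have hdist0 : (0:ℝ) ≤ max (dist q.1 q'.1) (dist q.2 q'.2) :=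
    le_trans dist_nonneg h1
  have hvf1 : dist (vf p q).1 (vf p q').1 = dist q.2 q'.2 := rfl
  have hvf2 : dist (vf p q).2 (vf p q').2 = dist (g p q.1) (g p q'.1) := by
    show dist (-(g p q.1)) (-(g p q'.1)) = _
    rw [Real.dist_eq, Real.dist_eq, neg_sub_neg, abs_sub_comm]
  rw [hvf1, hvf2]
  apply max_le
  · calc dist q.2 q'.2 ≤ max (dist q.1 q'.1) (dist q.2 q'.2) := h2
      _ ≤ (1 + (K:ℝ)) * max (dist q.1 q'.1) (dist q.2 q'.2) := by
          nlinarith [K.coe_nonneg]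
  · calc dist (g p q.1) (g p q'.1) ≤ K * dist q.1 q'.1 := hgl
      _ ≤ K * max (dist q.1 q'.1) (dist q.2 q'.2) := by
          apply mul_le_mul_of_nonneg_left h1 K.coe_nonneg
      _ ≤ (1 + (K:ℝ)) * max (dist q.1 q'.1) (dist q.2 q'.2) := by nlinarith

/-- Global uniqueness for the second-order ODE with fixed energy. -/
lemma sol_unique (hp : 1 < p) (hN0 : 0 < N) (hFN : F p N = c) {y z : ℝ → ℝ} (hy : IsSol p y) (hEy : HasEnergy p c y)
    (hz : IsSol p z) (hEz : HasEnergy p c z) (t₀ : ℝ)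
    (h1 : y t₀ = z t₀) (h2 : deriv y t₀ = deriv z t₀) : y = z := by
  set R := N + Real.sqrt c with hR
  have hc0 : 0 ≤ c := by
    have h4 := hEy.v_sq t₀
    have h5 := F_nonneg hp (y t₀)
    nlinarith [sq_nonneg (deriv y t₀)]
  have hR0 : 0 ≤ R := by
    have := Real.sqrt_nonneg c
    linarith
  have hmem : ∀ (w : ℝ → ℝ), IsSol p w → HasEnergy p c w → ∀ t,
      (w t, deriv w t) ∈ Metric.closedBall (0 : ℝ × ℝ) R := by
    intro w hw hEw t
    rw [Metric.mem_closedBall, dist_zero_right, Prod.norm_def]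
    apply max_le
    · show |w t| ≤ R
      have := sol_abs_le hp hN0 hFN hw hEw t
      linarith [Real.sqrt_nonneg c]
    · show |deriv w t| ≤ R
      have hv2 : deriv w t ^ 2 ≤ c := by
        have h4 := hEw.v_sq t
        have h5 := F_nonneg hp (w t)
        nlinarith
      have : |deriv w t| ≤ Real.sqrt c := by
        rw [← Real.sqrt_sq_eq_abs]
        exact Real.sqrt_le_sqrt hv2
      linarith [this]
  have hcurve : ∀ (w : ℝ → ℝ), IsSol p w → ∀ t,
      HasDerivAt (fun t => (w t, deriv w t)) (vf p (w t, deriv w t)) t := by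
    intro w hw t
    have ha : HasDerivAt w (deriv w t) t := (hw.diff t).hasDerivAt
    have hb : HasDerivAt (deriv w) (-(g p (w t))) t := by
      have := (hw.diff_deriv t).hasDerivAt
      rwa [hw.ode t] at this
    exact ha.prodMk hb
  funext t
  rcases eq_or_ne t t₀ with rfl | hne
  · exact h1
  · set a := min t t₀ - 1 with ha
    set b := max t t₀ + 1 with hb
    have hta : a < t := by simp [ha]; nlinarith [min_le_left t t₀, (0:ℝ) < 1]
    have h_t : t ∈ Ioo a b := ⟨by simp [ha]; linarith [min_le_left t t₀],
      by simp [hb]; linarith [le_max_left t t₀]⟩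
    have h_t₀ : t₀ ∈ Ioo a b := ⟨by simp [ha]; linarith [min_le_right t t₀],
      by simp [hb]; linarith [le_max_right t t₀]⟩
    have hkey := ODE_solution_unique_of_mem_Ioo
      (v := fun _ => vf p) (s := fun _ => Metric.closedBall (0 : ℝ × ℝ) R)
      (K := 1 + (1 + p * R ^ (p - 1)).toNNReal)
      (fun _ _ => vf_lipschitz hp R hR0)
      h_t₀
      (f := fun t => (y t, deriv y t)) (g := fun t => (z t, deriv z t))
      (fun s _ => ⟨hcurve y hy s, hmem y hy hEy s⟩)
      (fun s _ => ⟨hcurve z hz s, hmem z hz hEz s⟩)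
      (show (y t₀, deriv y t₀) = (z t₀, deriv z t₀) by rw [h1, h2])
    have := hkey h_t
    exact (Prod.mk.injEq _ _ _ _).mp this |>.1

end uniq


lemma G_N_pos (hp : 1 < p) (hN0 : 0 < N) (hFN : F p N = c) : 0 < G p c N N := by
  apply intervalIntegral.intervalIntegral_pos_of_pos_on (intble hp hN0 hFN) _ (by linarith)
  intro x hx
  exact hfun_pos hp hFN (abs_lt.mpr ⟨hx.1, hx.2⟩)

lemma G_eq (hp : 1 < p) (hN0 : 0 < N) (hFN : F p N = c) :
    G p c N N = 2 * ∫ z in (0:ℝ)..1,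
      1 / Real.sqrt (1 - z ^ 2 + 2 / (p + 1) * N ^ (p - 1) * (1 - z ^ (p + 1))) := by
  have hNne : N ≠ 0 := ne_of_gt hN0
  have hmemN : N ∈ Icc (-N) N := right_mem_Icc.mpr (by linarith)
  have hmem0 : (0:ℝ) ∈ Icc (-N) N := ⟨by linarith, by linarith⟩
  have hmemN' : -N ∈ Icc (-N) N := left_mem_Icc.mpr (by linarith)
  -- split the integral
  have hsplit : G p c N N = (∫ u in (-N)..0, hfun p c u) + ∫ u in (0:ℝ)..N, hfun p c u :=
    (intervalIntegral.integral_add_adjacent_intervals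
      (intble_sub hp hN0 hFN hmemN' hmem0) (intble_sub hp hN0 hFN hmem0 hmemN)).symm
  -- symmetry
  have hsym : (∫ u in (-N)..0, hfun p c u) = ∫ u in (0:ℝ)..N, hfun p c u := by
    have h1 := intervalIntegral.integral_comp_neg (a := (0:ℝ)) (b := N) (hfun p c)
    rw [neg_zero] at h1
    rw [← h1]
    congr 1
    funext x
    rw [hfun, hfun, F_neg]
  -- change of variables
  have hcv : (∫ u in (0:ℝ)..N, hfun p c u) = N * ∫ z in (0:ℝ)..1, hfun p c (N * z) := by
    have h1 := intervalIntegral.integral_comp_mul_left (a := (0:ℝ)) (b := 1) (c := N)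
      (hfun p c) hNne
    rw [mul_zero, mul_one] at h1
    rw [h1, smul_eq_mul, ← mul_assoc, mul_inv_cancel₀ hNne, one_mul]
  -- pointwise identity
  have hpoint : ∀ z ∈ Icc (0:ℝ) 1, N * hfun p c (N * z)
      = 1 / Real.sqrt (1 - z ^ 2 + 2 / (p + 1) * N ^ (p - 1) * (1 - z ^ (p + 1))) := by
    intro z hz
    have hz0 : 0 ≤ z := hz.1
    have hNz : 0 ≤ N * z := mul_nonneg hN0.le hz0
    have e1 : |N * z| = N * z := abs_of_nonneg hNz
    have e2 : (N * z) ^ (p + 1) = N ^ (p + 1) * z ^ (p + 1) :=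
      Real.mul_rpow hN0.le hz0
    have e3 : N ^ (p + 1) = N ^ (p - 1) * N ^ 2 := by
      rw [← Real.rpow_natCast N 2, ← Real.rpow_add hN0]
      congr 1
      push_cast
      ring
    have e4 : |N| = N := abs_of_pos hN0
    have key : c - F p (N * z)
        = N ^ 2 * (1 - z ^ 2 + 2 / (p + 1) * N ^ (p - 1) * (1 - z ^ (p + 1))) := by
      rw [← hFN]
      unfold F
      rw [e1, e2, e4, e3]
      ring
    rw [hfun, key, Real.sqrt_mul (sq_nonneg N), Real.sqrt_sq hN0.le, mul_inv, ← mul_assoc,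
      mul_inv_cancel₀ hNne, one_mul, one_div]
  -- put together
  have hcongr : (∫ z in (0:ℝ)..1, hfun p c (N * z))
      = ∫ z in (0:ℝ)..1, (1 / N) *
        (1 / Real.sqrt (1 - z ^ 2 + 2 / (p + 1) * N ^ (p - 1) * (1 - z ^ (p + 1)))) := by
    apply intervalIntegral.integral_congr
    intro z hz
    rw [uIcc_of_le (by norm_num : (0:ℝ) ≤ 1)] at hz
    have hpz := hpoint z hz
    show hfun p c (N * z)
      = 1 / N * (1 / Real.sqrt (1 - z ^ 2 + 2 / (p + 1) * N ^ (p - 1) * (1 - z ^ (p + 1))))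
    rw [← hpz, ← mul_assoc, one_div, inv_mul_cancel₀ hNne, one_mul]
  rw [hsplit, hsym, hcv, hcongr, intervalIntegral.integral_const_mul]
  rw [← mul_assoc, mul_one_div_cancel hNne, one_mul]
  ring


end MPA

open Real Filter Topology

/-- Every nontrivial solution of `ÿ + y + |y|^{p-1}y = 0` with energy
`c = ẏ(0)² + y(0)² + (2/(p+1))|y(0)|^{p+1}` is periodic with minimal period
`L(c) = 4∫₀¹ dz/√(1 − z² + (2/(p+1))N(c)^{p−1}(1 − z^{p+1}))`, where `N(c) > 0` solves
`N(c)² + (2/(p+1))N(c)^{p+1} = c`, and its maximal amplitude is `N(c)`. -/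
theorem minimal_period_and_amplitude (p : ℝ) (hp : 1 < p)
    (y : ℝ → ℝ) (hy : ContDiff ℝ 2 y)
    (hode : ∀ t : ℝ, deriv (deriv y) t + y t + |y t| ^ (p - 1) * y t = 0)
    (hnontriv : (y 0, deriv y 0) ≠ (0, 0))
    (c : ℝ) (hc : c = deriv y 0 ^ 2 + y 0 ^ 2 + 2 / (p + 1) * |y 0| ^ (p + 1))
    (N : ℝ) (hN_pos : 0 < N) (hN : N ^ 2 + 2 / (p + 1) * N ^ (p + 1) = c)
    (L : ℝ)
    (hL : L = 4 * ∫ z in (0:ℝ)..1,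
      1 / Real.sqrt (1 - z ^ 2 + 2 / (p + 1) * N ^ (p - 1) * (1 - z ^ (p + 1)))) :
    -- c > 0
    0 < c ∧
    -- y is L-periodic
    Function.Periodic y L ∧
    -- L is the minimal period
    (∀ L' : ℝ, 0 < L' → L' < L → ¬ Function.Periodic y L') ∧
    -- max_{t∈ℝ} |y(t)| = N
    IsGreatest (Set.range fun t => |y t|) N := by
  have hsol : MPA.IsSol p y := by
    refine ⟨hy, fun t => ?_⟩
    have := hode t
    simp only [MPA.g]
    linarith
  have hFN : MPA.F p N = c := by
    unfold MPA.F
    rw [abs_of_pos hN_pos]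
    exact hN
  have hE : MPA.HasEnergy p c y := by
    intro t
    have := hsol.energy hp t
    rw [hc]
    unfold MPA.F at this ⊢
    linarith
  -- c > 0
  have hc_pos : 0 < c := by
    rw [← hN]
    have h1 : 0 < N ^ (p + 1) := Real.rpow_pos_of_pos hN_pos _
    have h2 : (0:ℝ) < 2 / (p + 1) := by positivity
    nlinarith [sq_nonneg N, pow_pos hN_pos 2]
  -- half-period
  set P := MPA.G p c N N with hPdef
  have hP0 : 0 < P := MPA.G_N_pos hp hN_pos hFN
  have hLP : L = 2 * P := by
    rw [hL, hPdef, MPA.G_eq hp hN_pos hFN]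
    ring
  -- a time where the solution attains its maximum
  obtain ⟨t₀, hyt₀, hvt₀⟩ := MPA.exists_top hp hN_pos hFN hsol hE
  -- first half swing
  obtain ⟨hs1, hs2, hs3⟩ := MPA.halfswing hp hN_pos hFN hsol hE t₀ hyt₀ hvt₀
  -- second half swing (apply to -y)
  have hu1 : (fun t => -(y t)) (t₀ + P) = N := by simp only; rw [hs1]; ring
  have hu2 : deriv (fun t => -(y t)) (t₀ + P) = 0 := by
    rw [MPA.deriv_neg_fun]
    simp only
    rw [hs2]; ring
  obtain ⟨ht1, ht2, ht3⟩ := MPA.halfswing hp hN_pos hFN hsol.neg hE.neg (t₀ + P) hu1 hu2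
  have hy2P : y (t₀ + P + P) = N := by
    have h' : -(y (t₀ + P + P)) = -N := ht1
    linarith
  have hv2P : deriv y (t₀ + P + P) = 0 := by
    have h' := ht2
    rw [MPA.deriv_neg_fun] at h'
    have h'' : -(deriv y (t₀ + P + P)) = 0 := h'
    linarith
  -- periodicity via uniqueness
  have hyshift : MPA.IsSol p (fun t => y (t + L)) := hsol.shift L
  have hEshift : MPA.HasEnergy p c (fun t => y (t + L)) := hE.shift L
  have hperiodic : (fun t => y (t + L)) = y := by
    apply MPA.sol_unique hp hN_pos hFN hyshift hEshift hsol hE t₀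
    · show y (t₀ + L) = y t₀
      rw [hLP, hyt₀, show t₀ + 2 * P = t₀ + P + P by ring, hy2P]
    · rw [MPA.deriv_shift]
      show deriv y (t₀ + L) = deriv y t₀
      rw [hLP, hvt₀, show t₀ + 2 * P = t₀ + P + P by ring, hv2P]
  have hper : Function.Periodic y L := fun x => congrFun hperiodic x
  refine ⟨hc_pos, hper, ?_, ?_⟩
  · -- minimality
    intro L' hL'0 hL'L hper'
    have h1 : y (t₀ + L') = N := by rw [hper' t₀, hyt₀]
    have habs : |y (t₀ + L')| < N ∨ y (t₀ + L') = -N := by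
      rcases lt_trichotomy (t₀ + L') (t₀ + P) with h | h | h
      · exact Or.inl (hs3 (t₀ + L') ⟨by linarith, h⟩)
      · exact Or.inr (h ▸ hs1)
      · left
        have hmem : t₀ + L' ∈ Set.Ioo (t₀ + P) (t₀ + P + P) := by
          constructor
          · exact h
          · rw [hLP] at hL'L; linarith
        have := ht3 (t₀ + L') hmem
        rwa [abs_neg] at this
    rcases habs with h | h
    · rw [h1, abs_of_pos hN_pos] at h
      exact lt_irrefl _ h
    · rw [h1] at h
      linarith
  · -- maximal amplitude
    constructor
    · exact ⟨t₀, show |y t₀| = N by rw [hyt₀]; exact abs_of_pos hN_pos⟩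
    · rintro r ⟨t, rfl⟩
      exact MPA.sol_abs_le hp hN_pos hFN hsol hE t
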